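/- Let L(z) = M_T(z/2)·M_V(z)·M_T(z/2) be the leapfrog matrix for the harmonic oscillator, let α = 1/2 + (√3/6)·i, and let R(h) be the entrywise real part of L(α h)·L(conj(α) h). Then (fun h : ℝ => R(−h)·R(h) − 1) is O(h⁸) as h → 0; that is, the projected fourth-order method R̂⁴ is pseudo-symmetric of order 7 for the harmonic oscillator. -/

import Mathlib

open Matrix Asymptotics Filter

attribute [local instance] Matrix.normedAddCommGroup Matrix.normedSpace

/-- Exact evolution matrix of the harmonic oscillator `q' = p`, `p' = -q`. -/
noncomputable def MH (z : ℂ) : Matrix (Fin 2) (Fin 2) ℂ :=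
  !![Complex.cos z, Complex.sin z; -Complex.sin z, Complex.cos z]

/-- Exact evolution matrix of the kinetic part. -/
def MT (z : ℂ) : Matrix (Fin 2) (Fin 2) ℂ := !![1, z; 0, 1]

/-- Exact evolution matrix of the potential part. -/
def MV (z : ℂ) : Matrix (Fin 2) (Fin 2) ℂ := !![1, 0; -z, 1]

/-- The leapfrog/Strang splitting matrix. -/
noncomputable def L (z : ℂ) : Matrix (Fin 2) (Fin 2) ℂ := MT (z / 2) * MV z * MT (z / 2)

/-- The coefficient `α = 1/2 + (√3/6) i`. -/
noncomputable def αc : ℂ := 1 / 2 + (Real.sqrt 3 / 6 : ℝ) * Complex.I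

/-- The real projection of the composition `S_{αh} ∘ S_{ᾱh}`. -/
noncomputable def Rproj (h : ℝ) : Matrix (Fin 2) (Fin 2) ℝ :=
  (L (αc * (h : ℂ)) * L (starRingEnd ℂ αc * (h : ℂ))).map Complex.re

lemma L_eq (z : ℂ) : L z = !![1 - z^2/2, z - z^3/4; -z, 1 - z^2/2] := by
  simp only [L, MT, MV, Matrix.mul_fin_two]
  norm_num
  refine ⟨⟨?_, ?_⟩, ?_⟩ <;> ring

lemma Rproj_eq (h : ℝ) : Rproj h =
    !![1 - h^2/2 + h^4/24, h - h^3/6 + h^5/72; -h + h^3/6, 1 - h^2/2 + h^4/24] := by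
  have hs : Real.sqrt 3 * Real.sqrt 3 = 3 := Real.mul_self_sqrt (by norm_num)
  have e1 : αc.re = 1/2 := by simp [αc]
  have e2 : αc.im = Real.sqrt 3 / 6 := by simp [αc]
  have e3 : ((starRingEnd ℂ) αc).re = 1/2 := by simp [e1]
  have e4 : ((starRingEnd ℂ) αc).im = -(Real.sqrt 3 / 6) := by simp [e2]
  rw [Rproj, L_eq, L_eq, Matrix.mul_fin_two]
  ext i j
  fin_cases i <;> fin_cases j
  · simp only [Matrix.map_apply, Matrix.cons_val', Matrix.cons_val_zero, Matrix.cons_val_one,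
      Matrix.head_cons, Matrix.empty_val', Matrix.cons_val_fin_one, Matrix.head_fin_const, Matrix.of_apply,
      Fin.mk_zero, Fin.mk_one, pow_succ, pow_zero, one_mul, Complex.add_re, Complex.mul_re, Complex.mul_im, Complex.sub_re, Complex.sub_im,
      Complex.add_im, Complex.neg_re, Complex.neg_im, Complex.one_re, Complex.one_im,
      Complex.ofReal_re, Complex.ofReal_im, Complex.div_ofNat_re, Complex.div_ofNat_im,
      e1, e2, e3, e4]
    linear_combination ((1:ℝ)/288) * h^4 * hs
  · simp only [Matrix.map_apply, Matrix.cons_val', Matrix.cons_val_zero, Matrix.cons_val_one,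
      Matrix.head_cons, Matrix.empty_val', Matrix.cons_val_fin_one, Matrix.head_fin_const, Matrix.of_apply,
      Fin.mk_zero, Fin.mk_one, pow_succ, pow_zero, one_mul, Complex.add_re, Complex.mul_re, Complex.mul_im, Complex.sub_re, Complex.sub_im,
      Complex.add_im, Complex.neg_re, Complex.neg_im, Complex.one_re, Complex.one_im,
      Complex.ofReal_re, Complex.ofReal_im, Complex.div_ofNat_re, Complex.div_ofNat_im,
      e1, e2, e3, e4]
    linear_combination (((1:ℝ)/144) * h^3 + ((7:ℝ)/3456) * h^5
      + ((1:ℝ)/10368) * h^5 * (Real.sqrt 3 * Real.sqrt 3)) * hs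
  · simp only [Matrix.map_apply, Matrix.cons_val', Matrix.cons_val_zero, Matrix.cons_val_one,
      Matrix.head_cons, Matrix.empty_val', Matrix.cons_val_fin_one, Matrix.head_fin_const, Matrix.of_apply,
      Fin.mk_zero, Fin.mk_one, pow_succ, pow_zero, one_mul, Complex.add_re, Complex.mul_re, Complex.mul_im, Complex.sub_re, Complex.sub_im,
      Complex.add_im, Complex.neg_re, Complex.neg_im, Complex.one_re, Complex.one_im,
      Complex.ofReal_re, Complex.ofReal_im, Complex.div_ofNat_re, Complex.div_ofNat_im,
      e1, e2, e3, e4]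
    linear_combination ((1:ℝ)/72) * h^3 * hs
  · simp only [Matrix.map_apply, Matrix.cons_val', Matrix.cons_val_zero, Matrix.cons_val_one,
      Matrix.head_cons, Matrix.empty_val', Matrix.cons_val_fin_one, Matrix.head_fin_const, Matrix.of_apply,
      Fin.mk_zero, Fin.mk_one, pow_succ, pow_zero, one_mul, Complex.add_re, Complex.mul_re, Complex.mul_im, Complex.sub_re, Complex.sub_im,
      Complex.add_im, Complex.neg_re, Complex.neg_im, Complex.one_re, Complex.one_im,
      Complex.ofReal_re, Complex.ofReal_im, Complex.div_ofNat_re, Complex.div_ofNat_im,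
      e1, e2, e3, e4]
    linear_combination ((1:ℝ)/288) * h^4 * hs


/-- the projected fourth-order method `R̂⁴` is pseudo-symmetric
of order 7 for the harmonic oscillator. -/
theorem projected_two_stage_composition_pseudo_symmetric_order_seven :
    (fun h : ℝ => Rproj (-h) * Rproj h - 1) =O[nhds 0] fun h : ℝ => h ^ 8 := by
  have key : ∀ h : ℝ, Rproj (-h) * Rproj h - 1
      = h ^ 8 • (!![-1/1728, 0; 0, -1/1728] : Matrix (Fin 2) (Fin 2) ℝ) := by
    intro h
    rw [Rproj_eq, Rproj_eq, Matrix.mul_fin_two, Matrix.one_fin_two]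
    ext i j
    fin_cases i <;> fin_cases j <;>
      simp [Matrix.smul_apply] <;> ring
  refine Asymptotics.isBigO_iff.2 ⟨‖(!![-1/1728, 0; 0, -1/1728] : Matrix (Fin 2) (Fin 2) ℝ)‖,
    Filter.Eventually.of_forall fun h => ?_⟩
  rw [key h, norm_smul]
  simp [mul_comm]
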